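/- Lemma on partial transpose of lattice states: for a vector i = (i₁,…,iₙ) ∈ {0,1,2,3}ⁿ, let S(i) = {(j₁,…,jₙ) : ⊕ₗ δ_{iₗ jₗ} = 1} (XOR of indicator bits equals 1). Then T_A(ψ_{i₁}⊗⋯⊗ψ_{iₙ}) = (1/2ⁿ)·(I − 2·Σ_{j∈S(i)} ψ_{f(j₁)}⊗⋯⊗ψ_{f(jₙ)}), where f(0)=2, f(1)=3, f(2)=0, f(3)=1. -/
import Mathlib


open Matrix

noncomputable def pauli : Fin 4 → Matrix (Fin 2) (Fin 2) ℂ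
  | 0 => 1
  | 1 => !![0, 1; 1, 0]
  | 2 => !![0, -Complex.I; Complex.I, 0]
  | 3 => !![1, 0; 0, -1]

/-- Density operator of the Bell state `|ψᵢ⟩ = (1 ⊗ σᵢ)|ψ₀⟩`,
`|ψ₀⟩ = (|00⟩+|11⟩)/√2`, as a matrix on `ℂ² ⊗ ℂ²`. -/
noncomputable def bell (i : Fin 4) :
    Matrix (Fin 2 × Fin 2) (Fin 2 × Fin 2) ℂ :=
  fun p q => (1 / 2 : ℂ) * pauli i p.2 p.1 * (starRingEnd ℂ) (pauli i q.2 q.1)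

/-- Partial transpose on the first tensor factor. -/
def PT {d : ℕ} (X : Matrix (Fin d × Fin d) (Fin d × Fin d) ℂ) :
    Matrix (Fin d × Fin d) (Fin d × Fin d) ℂ :=
  fun p q => X (q.1, p.2) (p.1, q.2)

/-- `n`-fold tensor product of Bell density operators. -/
noncomputable def nBell {n : ℕ} (i : Fin n → Fin 4) :
    Matrix (Fin n → Fin 2 × Fin 2) (Fin n → Fin 2 × Fin 2) ℂ :=
  fun p q => ∏ l, bell (i l) (p l) (q l)

/-- Partial transpose acting factorwise on all `n` Alice qubits. -/
def PTn {n : ℕ} (X : Matrix (Fin n → Fin 2 × Fin 2) (Fin n → Fin 2 × Fin 2) ℂ) :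
    Matrix (Fin n → Fin 2 × Fin 2) (Fin n → Fin 2 × Fin 2) ℂ :=
  fun p q => X (fun l => ((q l).1, (p l).2)) (fun l => ((p l).1, (q l).2))

/-- The bijection describing the action of the partial transpose on Bell states. -/
def f : Fin 4 → Fin 4
  | 0 => 2
  | 1 => 3
  | 2 => 0
  | 3 => 1

lemma bell_sum (a b : Fin 2 × Fin 2) : ∑ k : Fin 4, bell k a b = if a = b then 1 else 0 := by
  obtain ⟨a1,a2⟩ := a; obtain ⟨b1,b2⟩ := b
  fin_cases a1 <;> fin_cases a2 <;> fin_cases b1 <;> fin_cases b2 <;>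
    simp [bell, pauli, Fin.sum_univ_four, Prod.ext_iff, Complex.ext_iff] <;> norm_num

lemma bell_sum_f (a b : Fin 2 × Fin 2) :
    ∑ k : Fin 4, bell (f k) a b = if a = b then 1 else 0 := by
  rw [← bell_sum a b, Fin.sum_univ_four, Fin.sum_univ_four]
  simp [f]; ring

lemma key (i : Fin 4) (a b : Fin 2 × Fin 2) :
    bell i (b.1, a.2) (a.1, b.2)
      = ∑ k : Fin 4, (if i = k then (-1:ℂ) else 1)/2 * bell (f k) a b := by
  have h1 : bell i (b.1, a.2) (a.1, b.2) = (if a = b then (1:ℂ)/2 else 0) - bell (f i) a b := by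
    obtain ⟨a1,a2⟩ := a; obtain ⟨b1,b2⟩ := b
    fin_cases i <;> fin_cases a1 <;> fin_cases a2 <;> fin_cases b1 <;> fin_cases b2 <;>
      simp [bell, pauli, f, Prod.ext_iff, Complex.ext_iff] <;> norm_num
  have h2 : ∀ k : Fin 4, (if i = k then (-1:ℂ) else 1)/2 * bell (f k) a b
      = (1/2) * bell (f k) a b - (if i = k then bell (f k) a b else 0) := by
    intro k; split <;> ring
  rw [h1, Finset.sum_congr rfl fun k _ => h2 k, Finset.sum_sub_distrib,
    Finset.sum_ite_eq, ← Finset.mul_sum, bell_sum_f]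
  simp only [Finset.mem_univ, if_true]
  split <;> ring

/-- Partial transpose of a lattice state: `T_A(ψ_{i₁}⊗⋯⊗ψ_{iₙ}) =
(1/2ⁿ)(1 − 2 Σ_{j ∈ S(i)} ψ_{f(j₁)}⊗⋯⊗ψ_{f(jₙ)})`, where `S(i)` is the set of
index vectors `j` whose agreement pattern with `i` has odd parity. -/
theorem partial_transpose_lattice {n : ℕ} (i : Fin n → Fin 4) :
    PTn (nBell i) = (1 / 2 ^ n : ℂ) •
      ((1 : Matrix (Fin n → Fin 2 × Fin 2) (Fin n → Fin 2 × Fin 2) ℂ) -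
        (2 : ℂ) • ∑ j ∈ Finset.univ.filter
          (fun j : Fin n → Fin 4 => (∑ l, if i l = j l then 1 else 0) % 2 = 1),
          nBell (fun l => f (j l))) := by
  funext p q
  have hE : ∀ j : Fin n → Fin 4, nBell (fun l => f (j l)) p q
      = ∏ l, bell (f (j l)) (p l) (q l) := fun j => rfl
  -- LHS computation
  have lhs_eq : PTn (nBell i) p q
      = ∑ j : Fin n → Fin 4, (∏ l, (if i l = j l then (-1:ℂ) else 1)/2)
          * ∏ l, bell (f (j l)) (p l) (q l) := by
    show (∏ l, bell (i l) ((q l).1, (p l).2) ((p l).1, (q l).2)) = _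
    have : ∀ l, bell (i l) ((q l).1, (p l).2) ((p l).1, (q l).2)
        = ∑ k : Fin 4, (if i l = k then (-1:ℂ) else 1)/2 * bell (f k) (p l) (q l) :=
      fun l => key (i l) (p l) (q l)
    rw [Finset.prod_congr rfl fun l _ => this l, Finset.prod_univ_sum]
    refine Finset.sum_congr rfl fun j _ => ?_
    rw [Finset.prod_mul_distrib]
  -- sign computation
  have hsign : ∀ j : Fin n → Fin 4, (∏ l, (if i l = j l then (-1:ℂ) else 1)/2)
      = (1 / 2 ^ n : ℂ) * (if (∑ l, if i l = j l then 1 else 0) % 2 = 1 then -1 else 1) := by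
    intro j
    rw [Finset.prod_div_distrib, Finset.prod_const]
    have : (∏ l, (if i l = j l then (-1:ℂ) else 1))
        = (-1 : ℂ) ^ (∑ l, if i l = j l then 1 else 0) := by
      rw [← Finset.prod_pow_eq_pow_sum]
      exact Finset.prod_congr rfl fun l _ => by split <;> simp
    rw [this, Finset.card_univ, Fintype.card_fin]
    rcases Nat.even_or_odd (∑ l, if i l = j l then 1 else 0) with h | h
    · have h0 := Nat.even_iff.mp h
      rw [h.neg_one_pow, if_neg (by omega)]; ring
    · rw [h.neg_one_pow, if_pos (Nat.odd_iff.mp h)]; ring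
  -- identity matrix entry as full sum
  have hone : (if p = q then (1:ℂ) else 0)
      = ∑ j : Fin n → Fin 4, ∏ l, bell (f (j l)) (p l) (q l) := by
    have hps := Finset.prod_univ_sum (fun _ : Fin n => (Finset.univ : Finset (Fin 4)))
      (fun l k => bell (f k) (p l) (q l))
    rw [Fintype.piFinset_univ] at hps
    rw [← hps]
    have : ∀ l : Fin n, (∑ k : Fin 4, bell (f k) (p l) (q l))
        = if p l = q l then 1 else 0 := fun l => bell_sum_f _ _
    rw [Finset.prod_congr rfl fun l _ => this l]
    by_cases h : p = q
    · subst h; simp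
    · rw [if_neg h]
      obtain ⟨l, hl⟩ := Function.ne_iff.mp h
      have hz : (if p l = q l then (1:ℂ) else 0) = 0 := if_neg hl
      exact (Finset.prod_eq_zero (Finset.mem_univ l) hz).symm
  rw [lhs_eq]
  simp only [Matrix.smul_apply, Matrix.sub_apply, Matrix.smul_apply, Matrix.one_apply,
    Matrix.sum_apply, smul_eq_mul, hE]
  rw [hone]
  rw [← Finset.sum_filter_add_sum_filter_not Finset.univ
    (fun j : Fin n → Fin 4 => (∑ l, if i l = j l then 1 else 0) % 2 = 1)
    (fun j => ∏ l, bell (f (j l)) (p l) (q l))]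
  rw [← Finset.sum_filter_add_sum_filter_not Finset.univ
    (fun j : Fin n → Fin 4 => (∑ l, if i l = j l then 1 else 0) % 2 = 1)
    (fun j => (∏ l, (if i l = j l then (-1:ℂ) else 1)/2) * ∏ l, bell (f (j l)) (p l) (q l))]
  have h1 : ∑ j ∈ Finset.univ.filter
      (fun j : Fin n → Fin 4 => (∑ l, if i l = j l then 1 else 0) % 2 = 1),
      (∏ l, (if i l = j l then (-1:ℂ) else 1)/2) * ∏ l, bell (f (j l)) (p l) (q l)
      = ∑ j ∈ Finset.univ.filter
      (fun j : Fin n → Fin 4 => (∑ l, if i l = j l then 1 else 0) % 2 = 1),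
      (-(1 / 2 ^ n : ℂ)) * ∏ l, bell (f (j l)) (p l) (q l) := by
    refine Finset.sum_congr rfl fun j hj => ?_
    rw [hsign j, if_pos (Finset.mem_filter.mp hj).2]; ring
  have h2 : ∑ j ∈ Finset.univ.filter
      (fun j : Fin n → Fin 4 => ¬(∑ l, if i l = j l then 1 else 0) % 2 = 1),
      (∏ l, (if i l = j l then (-1:ℂ) else 1)/2) * ∏ l, bell (f (j l)) (p l) (q l)
      = ∑ j ∈ Finset.univ.filter
      (fun j : Fin n → Fin 4 => ¬(∑ l, if i l = j l then 1 else 0) % 2 = 1),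
      (1 / 2 ^ n : ℂ) * ∏ l, bell (f (j l)) (p l) (q l) := by
    refine Finset.sum_congr rfl fun j hj => ?_
    rw [hsign j, if_neg (Finset.mem_filter.mp hj).2]; ring
  rw [h1, h2, ← Finset.mul_sum, ← Finset.mul_sum]
  ring
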